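/- Let Y follow a MAL_p(μ, Dξ̃, DΣ̃D) distribution (defined via the mixture Y = μ + Dξ̃W + √W DΣ̃^{1/2}Z with W ~ Exp(1) independent of Z ~ N_p(0,I_p)), and let b ∈ ℝ^p with b ≠ 0. Then the linear combination Y^b = b'Y follows a univariate asymmetric Laplace distribution AL(μ*, τ*, δ*) with μ* = b'μ, τ* = (1/2)(1 − b'Dξ̃ / √(2 b'DΣ̃Db + (b'Dξ̃)²)), and δ* = b'DΣ̃Db / (2√(2 b'DΣ̃Db + (b'Dξ̃)²)). -/

import Mathlib

open MeasureTheory ProbabilityTheory Matrix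

open scoped ComplexOrder in
/-- The square root of a positive semidefinite matrix, as defined in the older Mathlib
(removed since; reinstated here with its old definition). -/
noncomputable def Matrix.PosSemidef.sqrt {n 𝕜 : Type*} [Fintype n] [DecidableEq n] [RCLike 𝕜]
    {A : Matrix n n 𝕜} (hA : A.PosSemidef) : Matrix n n 𝕜 :=
  hA.1.eigenvectorUnitary.1 * diagonal ((↑) ∘ (Real.sqrt ∘ hA.1.eigenvalues)) *
    (star hA.1.eigenvectorUnitary : Matrix n n 𝕜)

open MeasureTheory ProbabilityTheory Matrix Set Filter Complex
open scoped NNReal ENNReal Real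

lemma mySqrt_mul_self {p : ℕ} {A : Matrix (Fin p) (Fin p) ℝ} (hA : A.PosSemidef) :
    hA.sqrt * hA.sqrt = A := by
  have hU : (star hA.1.eigenvectorUnitary : Matrix (Fin p) (Fin p) ℝ) * hA.1.eigenvectorUnitary.1 = 1 :=
    Unitary.coe_star_mul_self _
  conv_rhs => rw [hA.1.spectral_theorem]
  rw [Unitary.conjStarAlgAut_apply, Matrix.PosSemidef.sqrt]
  simp only [Matrix.mul_assoc]
  rw [← Matrix.mul_assoc (star (hA.1.eigenvectorUnitary : Matrix (Fin p) (Fin p) ℝ)), hU,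
    Matrix.one_mul, ← Matrix.mul_assoc (Matrix.diagonal _), Matrix.diagonal_mul_diagonal]
  congr 3
  funext i
  simp [Real.mul_self_sqrt (hA.eigenvalues_nonneg i)]

lemma mySqrt_transpose {p : ℕ} {A : Matrix (Fin p) (Fin p) ℝ} (hA : A.PosSemidef) :
    hA.sqrtᵀ = hA.sqrt := by
  rw [← conjTranspose_eq_transpose_of_trivial, Matrix.PosSemidef.sqrt]
  simp [Matrix.star_eq_conjTranspose, Matrix.mul_assoc]

lemma myIntegral_cexp_Ioi {β : ℂ} (hβ : β.re < 0) :
    ∫ x in Ioi (0:ℝ), Complex.exp (β * x) = -β⁻¹ := by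
  have hβ0 : β ≠ 0 := fun h => by simp [h] at hβ
  have hint : IntegrableOn (fun x : ℝ => Complex.exp (β * x)) (Ioi 0) := by
    refine (exp_neg_integrableOn_Ioi 0 (neg_pos.mpr hβ)).mono' ?_ ?_
    · exact (Complex.continuous_exp.comp (continuous_const.mul Complex.continuous_ofReal)).aestronglyMeasurable
    · filter_upwards with x
      rw [Complex.norm_exp]
      simp [neg_mul]
  have hderiv : ∀ x ∈ Ioi (0:ℝ), HasDerivAt (fun x : ℝ => β⁻¹ * Complex.exp (β * x)) (Complex.exp (β * x)) x := by
    intro x _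
    have h1 : HasDerivAt (fun x : ℝ => β * (x:ℂ)) β x := by
      simpa using (Complex.ofRealCLM.hasDerivAt (x := x)).const_mul β
    have := (Complex.hasDerivAt_exp (β * x)).comp x h1
    have h2 := this.const_mul β⁻¹
    refine h2.congr_deriv ?_
    field_simp
  have htend : Tendsto (fun x : ℝ => β⁻¹ * Complex.exp (β * x)) atTop (nhds 0) := by
    rw [show (0:ℂ) = β⁻¹ * 0 by ring]
    refine Tendsto.const_mul _ ?_
    rw [tendsto_zero_iff_norm_tendsto_zero]
    have : (fun x : ℝ => ‖Complex.exp (β * x)‖) = fun x : ℝ => Real.exp (β.re * x) := by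
      ext x; rw [Complex.norm_exp]; norm_num
    rw [this]
    exact Real.tendsto_exp_atBot.comp (tendsto_id.const_mul_atTop_of_neg hβ)
  have := integral_Ioi_of_hasDerivAt_of_tendsto (f := fun x : ℝ => β⁻¹ * Complex.exp (β * x))
    (f' := fun x : ℝ => Complex.exp (β * x)) ?_ hderiv hint htend
  · rw [this]; simp
  · exact ((Complex.continuous_exp.comp (continuous_const.mul Complex.continuous_ofReal)).const_smul β⁻¹).continuousWithinAt

lemma myGaussian_char (c : ℝ) :
    ∫ x : ℝ, Complex.exp (Complex.I * c * x) ∂(gaussianReal 0 1) =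
      Complex.exp (-((c:ℂ)^2/2)) := by
  rw [gaussianReal_of_var_ne_zero 0 one_ne_zero]
  rw [show (gaussianPDF 0 1) = (fun x => ((Real.toNNReal (gaussianPDFReal 0 1 x) : ℝ≥0) : ℝ≥0∞)) from rfl]
  rw [integral_withDensity_eq_integral_smul ((measurable_gaussianPDFReal 0 1).real_toNNReal) _]
  have hs0 : Real.sqrt (2*Real.pi) ≠ 0 := by positivity
  have h2 : ((Real.sqrt (2*Real.pi) : ℝ) : ℂ)⁻¹ = Complex.exp (-(Real.log (Real.sqrt (2*Real.pi)) : ℂ)) := by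
    rw [← Complex.ofReal_inv, ← Complex.ofReal_neg, ← Complex.ofReal_exp]
    norm_cast
    rw [Real.exp_neg, Real.exp_log (by positivity)]
  have heq : ∀ x : ℝ, Real.toNNReal (gaussianPDFReal 0 1 x) • Complex.exp (Complex.I * c * x)
      = Complex.exp (-(1/2 : ℂ) * x^2 + (Complex.I * c) * x + -(Real.log (Real.sqrt (2 * Real.pi)) : ℂ)) := by
    intro x
    rw [NNReal.smul_def, Real.coe_toNNReal _ (gaussianPDFReal_nonneg _ _ _), gaussianPDFReal,
      Complex.real_smul]
    push_cast
    rw [mul_one, h2, ← Complex.exp_add, ← Complex.exp_add]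
    congr 1
    ring
  simp_rw [heq]
  rw [integral_cexp_quadratic (by norm_num : (-(1/2 : ℂ)).re < 0)]
  have hπ : ((Real.pi : ℂ) / -(-(1/2))) = ((2 * Real.pi : ℝ) : ℂ) := by push_cast; ring
  rw [hπ, show (1/2 : ℂ) = ((1/2 : ℝ) : ℂ) by norm_num, ← Complex.ofReal_cpow (by positivity),
    ← Real.sqrt_eq_rpow]
  have h3 : (-(↑(Real.log (Real.sqrt (2*Real.pi))) : ℂ) - (Complex.I*↑c)^2/(4 * -((1/2 : ℝ) : ℂ))) = -(↑(Real.log (Real.sqrt (2*Real.pi))) : ℂ) + -((c:ℂ)^2/2) := by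
    rw [show (Complex.I*(c:ℂ))^2 = Complex.I^2 * (c:ℂ)^2 by ring, Complex.I_sq]
    push_cast
    ring
  rw [h3, Complex.exp_add, ← h2, ← mul_assoc, mul_inv_cancel₀ (by exact_mod_cast hs0), one_mul]

lemma myPi_integral {ι : Type*} [Fintype ι] (μ : ι → Measure ℝ) [h : ∀ i, SigmaFinite (μ i)]
    (f : ι → ℝ → ℂ) :
    ∫ x : ι → ℝ, ∏ i, f i (x i) ∂(Measure.pi μ) = ∏ i, ∫ x, f i x ∂(μ i) :=
  MeasureTheory.integral_fintype_prod_eq_prod (E := fun _ => ℝ) f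

lemma myMap_pi {Ω : Type*} [MeasurableSpace Ω] (P : Measure Ω) [IsProbabilityMeasure P]
    {p : ℕ} (Z : Ω → Fin p → ℝ) (hZm : Measurable Z)
    (hZindep : iIndepFun (fun i ω => Z ω i) P)
    (hZgauss : ∀ i, Measure.map (fun ω => Z ω i) P = gaussianReal 0 1) :
    Measure.map Z P = Measure.pi (fun _ : Fin p => gaussianReal 0 1) := by
  symm
  apply Measure.pi_eq
  intro s hs
  rw [Measure.map_apply hZm (MeasurableSet.univ_pi hs)]
  have h1 : Z ⁻¹' (Set.pi Set.univ s) = ⋂ i ∈ Finset.univ, (fun ω => Z ω i) ⁻¹' (s i) := by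
    ext ω; simp [Set.mem_pi]
  rw [h1, hZindep.measure_inter_preimage_eq_mul Finset.univ (fun i _ => hs i)]
  refine Finset.prod_congr rfl fun i _ => ?_
  rw [← hZgauss i,
    Measure.map_apply (show Measurable fun ω => Z ω i from (measurable_pi_apply i).comp hZm) (hs i)]

lemma myDot_char_pi {p : ℕ} (u : Fin p → ℝ) (t : ℝ) :
    ∫ x : Fin p → ℝ, Complex.exp (Complex.I * t * ((∑ i, u i * x i : ℝ) : ℂ))
        ∂(Measure.pi fun _ : Fin p => gaussianReal 0 1)
      = Complex.exp (-(((t^2 * ∑ i, (u i)^2 : ℝ) : ℂ)/2)) := by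
  calc ∫ x : Fin p → ℝ, Complex.exp (Complex.I * t * ((∑ i, u i * x i : ℝ) : ℂ))
          ∂(Measure.pi (fun _ : Fin p => gaussianReal 0 1))
      = ∫ x : Fin p → ℝ, ∏ i, Complex.exp (Complex.I * ((t * u i : ℝ) : ℂ) * (x i))
          ∂(Measure.pi (fun _ : Fin p => gaussianReal 0 1)) := by
        congr 1; ext x
        rw [← Complex.exp_sum]
        congr 1
        push_cast
        rw [Finset.mul_sum]
        refine Finset.sum_congr rfl fun i _ => by ring
    _ = ∏ i, ∫ x : ℝ, Complex.exp (Complex.I * ((t * u i : ℝ) : ℂ) * x) ∂(gaussianReal 0 1) :=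
        myPi_integral (fun _ => gaussianReal 0 1) (fun i x => Complex.exp (Complex.I * ((t * u i : ℝ) : ℂ) * x))
    _ = ∏ i, Complex.exp (-(((t * u i : ℝ) : ℂ)^2/2)) := by
        exact Finset.prod_congr rfl fun i _ => myGaussian_char (t * u i)
    _ = Complex.exp (-(((t^2 * ∑ i, (u i)^2 : ℝ) : ℂ)/2)) := by
        rw [← Complex.exp_sum]
        congr 1
        have h4 : ((t^2 * ∑ i, (u i)^2 : ℝ) : ℂ)/2 = ∑ i, ((t * u i : ℝ) : ℂ)^2/2 := by
          push_cast
          rw [Finset.mul_sum, Finset.sum_div]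
          exact Finset.sum_congr rfl fun i _ => by ring
        rw [h4, ← Finset.sum_neg_distrib]

lemma myExpMeasure_cexp {β : ℂ} (hβ : β.re < 1) :
    ∫ w, Complex.exp (β * w) ∂(expMeasure 1) = (1 - β)⁻¹ := by
  have hb1 : (β - 1).re < 0 := by simp [Complex.sub_re]; linarith
  rw [show expMeasure 1 = volume.withDensity
      (fun x => ((Real.toNNReal (exponentialPDFReal 1 x) : ℝ≥0) : ℝ≥0∞)) from rfl]
  rw [integral_withDensity_eq_integral_smul ((measurable_exponentialPDFReal 1).real_toNNReal) _]
  have heq : ∀ x : ℝ, Real.toNNReal (exponentialPDFReal 1 x) • Complex.exp (β * x)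
      = Set.indicator (Ici (0:ℝ)) (fun x => Complex.exp ((β - 1) * x)) x := by
    intro x
    rw [exponentialPDFReal, gammaPDFReal]
    by_cases hx : (0:ℝ) ≤ x
    · rw [if_pos hx, Set.indicator_of_mem (mem_Ici.mpr hx)]
      rw [Real.Gamma_one]
      norm_num [Real.rpow_natCast]
      rw [NNReal.smul_def, Real.coe_toNNReal _ (Real.exp_nonneg _), Complex.real_smul,
        Complex.ofReal_exp, ← Complex.exp_add]
      congr 1
      push_cast
      ring
    · rw [if_neg hx, Set.indicator_of_notMem (by simpa using hx)]
      simp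
  simp_rw [heq]
  rw [integral_indicator measurableSet_Ici, integral_Ici_eq_integral_Ioi,
    myIntegral_cexp_Ioi hb1, ← inv_neg, neg_sub]

lemma myNorm_exp_I_mul (z x : ℝ) : ‖Complex.exp (Complex.I * z * x)‖ = 1 := by
  rw [Complex.norm_exp]
  simp [Complex.mul_re]

lemma myExpMeasure_ae_nonneg : ∀ᵐ w ∂(expMeasure 1), 0 ≤ w := by
  rw [ae_iff]
  have h : {w : ℝ | ¬ 0 ≤ w} = Iio 0 := by ext w; simp
  rw [h, show expMeasure 1 = volume.withDensity (exponentialPDF 1) from rfl,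
    withDensity_apply _ measurableSet_Iio]
  exact lintegral_exponentialPDF_of_nonpos le_rfl

/-- a linear combination `b'Y` of a `MAL_p(μ, Dξ̃, DΣ̃D)` random vector
(defined via the mixture representation) follows the univariate asymmetric Laplace
distribution `AL(μ*, τ*, δ*)`, characterized by its characteristic function
`φ(z) = e^{izμ*}(1 + δ*²z²/(τ*(1−τ*)) − iz δ*(1−2τ*)/(τ*(1−τ*)))⁻¹`. -/
theorem mal_linear_combination_AL {Ω : Type*} [MeasurableSpace Ω] (P : Measure Ω)
    [IsProbabilityMeasure P]
    {p : ℕ} (μ ξ d : Fin p → ℝ) (hd : ∀ i, 0 < d i)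
    (S : Matrix (Fin p) (Fin p) ℝ) (hS : S.PosDef)
    (D : Matrix (Fin p) (Fin p) ℝ) (hD : D = Matrix.diagonal d)
    (W : Ω → ℝ) (Z : Ω → Fin p → ℝ) (hWm : Measurable W) (hZm : Measurable Z)
    (hW : Measure.map W P = expMeasure 1)
    (hZindep : iIndepFun (fun i ω => Z ω i) P)
    (hZgauss : ∀ i, Measure.map (fun ω => Z ω i) P = gaussianReal 0 1)
    (hWZ : IndepFun W Z P)
    (Y : Ω → Fin p → ℝ)
    (hY : ∀ ω, Y ω =
      μ + W ω • D.mulVec ξ + Real.sqrt (W ω) • (D * hS.posSemidef.sqrt).mulVec (Z ω))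
    (b : Fin p → ℝ) (hb : b ≠ 0)
    (μs τs δs : ℝ)
    (hμs : μs = b ⬝ᵥ μ)
    (hτs : τs = (1 / 2) * (1 - (b ⬝ᵥ D.mulVec ξ) /
      Real.sqrt (2 * (b ⬝ᵥ (D * S * D).mulVec b) + (b ⬝ᵥ D.mulVec ξ) ^ 2)))
    (hδs : δs = (b ⬝ᵥ (D * S * D).mulVec b) /
      (2 * Real.sqrt (2 * (b ⬝ᵥ (D * S * D).mulVec b) + (b ⬝ᵥ D.mulVec ξ) ^ 2))) :
    ∀ z : ℝ,
      ∫ ω, Complex.exp (Complex.I * (z : ℂ) * ((b ⬝ᵥ Y ω : ℝ) : ℂ)) ∂P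
        = Complex.exp (Complex.I * (z : ℂ) * (μs : ℂ)) *
          (1 + ((δs ^ 2 * z ^ 2 / (τs * (1 - τs)) : ℝ) : ℂ)
            - Complex.I * (z : ℂ) * ((δs * (1 - 2 * τs) / (τs * (1 - τs)) : ℝ) : ℂ))⁻¹ := by
  intro z
  subst hD
  set Q : Matrix (Fin p) (Fin p) ℝ := hS.posSemidef.sqrt with hQ
  set a : ℝ := b ⬝ᵥ (Matrix.diagonal d).mulVec ξ with ha
  set s2 : ℝ := b ⬝ᵥ (Matrix.diagonal d * S * Matrix.diagonal d).mulVec b with hs2def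
  set r : ℝ := Real.sqrt (2 * s2 + a ^ 2) with hrdef
  set u : Fin p → ℝ := Matrix.vecMul b (Matrix.diagonal d * Q) with hu
  set c : Fin p → ℝ := fun i => d i * b i with hcdef
  set c0 : ℝ := b ⬝ᵥ μ with hc0def
  clear_value a s2 r c c0
  -- basic matrix identities
  have hDb : (Matrix.diagonal d).mulVec b = c := by
    ext i; simp [Matrix.mulVec_diagonal, hcdef]
  have hbD : Matrix.vecMul b (Matrix.diagonal d) = c := by
    ext i; simp [Matrix.vecMul_diagonal, hcdef, mul_comm]
  have hs2eq : s2 = c ⬝ᵥ S.mulVec c := by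
    rw [hs2def, Matrix.mul_assoc, ← Matrix.mulVec_mulVec, Matrix.dotProduct_mulVec,
      ← Matrix.mulVec_mulVec, hbD, hDb]
  have hc0 : c ≠ 0 := by
    intro hcz
    apply hb
    funext i
    have := congrFun hcz i
    simp only [hcdef, Pi.zero_apply] at this ⊢
    exact (mul_eq_zero.mp this).elim (fun h => absurd h (hd i).ne') id
  have hs2pos : 0 < s2 := by
    rw [hs2eq]
    simpa using hS.dotProduct_mulVec_pos hc0
  -- sqrt matrix facts
  have hQsymm : Qᵀ = Q := by
    exact mySqrt_transpose hS.posSemidef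
  have hQQ : Q * Q = S := mySqrt_mul_self hS.posSemidef
  have hsum : ∑ i, (u i)^2 = s2 := by
    have h1 : ∑ i, (u i)^2 = u ⬝ᵥ u := by simp [dotProduct, sq]
    have h2 : b ⬝ᵥ ((Matrix.diagonal d * Q) * (Matrix.diagonal d * Q)ᵀ).mulVec b = u ⬝ᵥ u := by
      rw [Matrix.dotProduct_mulVec, ← Matrix.vecMul_vecMul, ← hu, Matrix.vecMul_transpose,
        dotProduct_comm, Matrix.dotProduct_mulVec, ← hu]
    have h3 : (Matrix.diagonal d * Q) * (Matrix.diagonal d * Q)ᵀ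
        = Matrix.diagonal d * S * Matrix.diagonal d := by
      rw [Matrix.transpose_mul, hQsymm, Matrix.diagonal_transpose, ← hQQ]
      noncomm_ring
    rw [h1, ← h2, h3, ← hs2def]
  -- r facts
  have hr2pos : 0 < 2 * s2 + a ^ 2 := by nlinarith
  have hrpos : 0 < r := by rw [hrdef]; exact Real.sqrt_pos.mpr hr2pos
  have hr2 : r ^ 2 = 2 * s2 + a ^ 2 := by rw [hrdef]; exact Real.sq_sqrt hr2pos.le
  -- tau-delta algebra
  have hττ : τs * (1 - τs) = s2 / (2 * r^2) := by
    rw [hτs]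
    have hstep : (1/2 * (1 - a/r)) * (1 - 1/2 * (1 - a/r)) = (r^2 - a^2)/(4 * r^2) := by
      field_simp
      ring
    rw [hstep, hr2]
    field_simp
    ring
  have hA : δs^2 * z^2 / (τs * (1 - τs)) = s2 * z^2 / 2 := by
    rw [hδs, hττ]
    field_simp
  have hB : δs * (1 - 2 * τs) / (τs * (1 - τs)) = a := by
    rw [hδs, hττ, hτs]
    field_simp
    ring
  -- pointwise linear combination
  have hkey : ∀ ω, b ⬝ᵥ Y ω = c0 + a * W ω + Real.sqrt (W ω) * (∑ i, u i * Z ω i) := by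
    intro ω
    rw [hY ω]
    rw [dotProduct_add, dotProduct_add, dotProduct_smul,
      dotProduct_smul, Matrix.dotProduct_mulVec b (Matrix.diagonal d * Q), ← hu,
      ← ha, ← hc0def, smul_eq_mul, smul_eq_mul]
    simp only [dotProduct]
    ring
  -- measure-theoretic setup
  haveI : IsProbabilityMeasure (expMeasure 1) := isProbabilityMeasure_expMeasure one_pos
  set Pm : Measure (Fin p → ℝ) := Measure.pi (fun _ : Fin p => gaussianReal 0 1) with hPm
  have hmapZ : Measure.map Z P = Pm := myMap_pi P Z hZm hZindep hZgauss
  have hprod : Measure.map (fun ω => (W ω, Z ω)) P = (expMeasure 1).prod Pm := by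
    rw [(indepFun_iff_map_prod_eq_prod_map_map hWm.aemeasurable hZm.aemeasurable).mp hWZ,
      hW, hmapZ]
  set F : ℝ × (Fin p → ℝ) → ℂ := fun q =>
    Complex.exp (Complex.I * z * ((c0 + a * q.1 + Real.sqrt q.1 * ∑ i, u i * q.2 i : ℝ) : ℂ))
    with hF
  clear_value F
  have hFapp : ∀ (w : ℝ) (x : Fin p → ℝ), F (w, x) =
      Complex.exp (Complex.I * z * ((c0 + a * w + Real.sqrt w * ∑ i, u i * x i : ℝ) : ℂ)) := by
    intro w x; rw [hF]
  have hFcont : Continuous F := by rw [hF]; fun_prop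
  have hFint : Integrable F ((expMeasure 1).prod Pm) := by
    refine ⟨hFcont.aestronglyMeasurable, ?_⟩
    refine HasFiniteIntegral.of_bounded (C := 1) (ae_of_all _ fun q => ?_)
    rw [hFapp q.1 q.2]
    exact le_of_eq (myNorm_exp_I_mul z _)
  set β : ℂ := Complex.I * z * a - ((z^2 * s2 / 2 : ℝ) : ℂ) with hβ
  have hβre : β.re < 1 := by
    rw [hβ]
    simp only [Complex.sub_re, Complex.ofReal_re, Complex.mul_re, Complex.mul_im,
      Complex.I_re, Complex.I_im, Complex.ofReal_im]
    nlinarith [sq_nonneg z, hs2pos]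
  have hinner : ∀ w : ℝ, 0 ≤ w →
      ∫ x, F (w, x) ∂Pm = Complex.exp (Complex.I * z * (c0 : ℂ)) * Complex.exp (β * w) := by
    intro w hw
    have hsplit : ∀ x : Fin p → ℝ, F (w, x) =
        Complex.exp (Complex.I * z * ((c0 + a * w : ℝ) : ℂ)) *
          Complex.exp (Complex.I * ((z * Real.sqrt w : ℝ) : ℂ) * ((∑ i, u i * x i : ℝ) : ℂ)) := by
      intro x
      rw [hFapp, ← Complex.exp_add]
      congr 1
      push_cast
      ring
    simp_rw [hsplit]
    rw [integral_const_mul, myDot_char_pi u (z * Real.sqrt w)]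
    have hexp : (((z * Real.sqrt w)^2 * ∑ i, (u i)^2 : ℝ) : ℂ) = ((z^2 * s2 * w : ℝ) : ℂ) := by
      norm_cast
      rw [mul_pow, Real.sq_sqrt hw, hsum]
      ring
    rw [hexp, ← Complex.exp_add, ← Complex.exp_add]
    congr 1
    rw [hβ]
    push_cast
    ring
  -- main calc
  calc ∫ ω, Complex.exp (Complex.I * z * ((b ⬝ᵥ Y ω : ℝ) : ℂ)) ∂P
      = ∫ ω, F (W ω, Z ω) ∂P := by
        refine integral_congr_ae (ae_of_all _ fun ω => ?_)
        show Complex.exp (Complex.I * z * ((b ⬝ᵥ Y ω : ℝ) : ℂ)) = F (W ω, Z ω)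
        rw [hkey ω, hFapp]
    _ = ∫ q, F q ∂((expMeasure 1).prod Pm) := by
        rw [← hprod, integral_map (hWm.prodMk hZm).aemeasurable hFcont.aestronglyMeasurable]
    _ = ∫ w, (∫ x, F (w, x) ∂Pm) ∂(expMeasure 1) := integral_prod F hFint
    _ = ∫ w, Complex.exp (Complex.I * z * (c0 : ℂ)) * Complex.exp (β * w) ∂(expMeasure 1) := by
        refine integral_congr_ae ?_
        filter_upwards [myExpMeasure_ae_nonneg] with w hw
        exact hinner w hw
    _ = Complex.exp (Complex.I * z * (c0 : ℂ)) * (1 - β)⁻¹ := by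
        rw [integral_const_mul, myExpMeasure_cexp hβre]
    _ = Complex.exp (Complex.I * (z : ℂ) * (μs : ℂ)) *
          (1 + ((δs ^ 2 * z ^ 2 / (τs * (1 - τs)) : ℝ) : ℂ)
            - Complex.I * (z : ℂ) * ((δs * (1 - 2 * τs) / (τs * (1 - τs)) : ℝ) : ℂ))⁻¹ := by
        rw [hμs, hA, hB]
        congr 1
        rw [hβ]
        push_cast
        ring
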